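/- Fix reals a < b and θ, and set Δ = b − a. For each integer k ≥ 1 define midpoints m_i = a + (2i−1)·Δ/(2k) for i = 1, …, k, and probabilities p_1 = Φ(m_1 − θ), p_i = Φ(m_i − θ) − Φ(m_{i−1} − θ) for 2 ≤ i ≤ k, p_{k+1} = 1 − Φ(m_k − θ), together with q_1 = −φ(m_1 − θ), q_i = φ(m_{i−1} − θ) − φ(m_i − θ) for 2 ≤ i ≤ k, and q_{k+1} = φ(m_k − θ) (the q_i are the derivatives of the p_i in θ). Then the Fisher information I_k(θ) = Σ_{i=1}^{k+1} q_i²/p_i of the k-bit uniform quantization of a N(θ,1) sample onto the alphabet {a, a+Δ/k, …, b} converges, as k → ∞, to the Fisher information of the rectified Gaussian N^R(θ,1,[a,b]): lim_{k→∞} I_k(θ) = φ(a−θ)²/Φ(a−θ) + φ(b−θ)²/(1−Φ(b−θ)) + Φ(b−θ) − Φ(a−θ) + (a−θ)·φ(a−θ) − (b−θ)·φ(b−θ). -/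

import Mathlib

open MeasureTheory Real Filter

/-- Standard Gaussian density. -/
noncomputable def phi (x : ℝ) : ℝ := (Real.sqrt (2 * Real.pi))⁻¹ * Real.exp (-(x ^ 2) / 2)

/-- Standard Gaussian cumulative distribution function. -/
noncomputable def Phi (x : ℝ) : ℝ := ∫ t in Set.Iic x, phi t

/-- The `i`-th cell midpoint of the uniform `k`-point grid on `[a, b]`. -/
noncomputable def mid (a b : ℝ) (k i : ℕ) : ℝ := a + (2 * (i : ℝ) - 1) * (b - a) / (2 * (k : ℝ))

lemma phi_pos (x : ℝ) : 0 < phi x := by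
  apply mul_pos (inv_pos.2 (Real.sqrt_pos.2 (by positivity))) (Real.exp_pos _)

lemma continuous_phi : Continuous phi := by
  unfold phi; fun_prop

lemma integrable_phi : Integrable phi := by
  have h : Integrable (fun x : ℝ => Real.exp (-(1/2) * x ^ 2)) := integrable_exp_neg_mul_sq (by norm_num)
  have := h.const_mul (Real.sqrt (2 * Real.pi))⁻¹
  convert this using 2 with x
  unfold phi; ring_nf

lemma integral_phi : ∫ x, phi x = 1 := by
  have h : ∫ x : ℝ, Real.exp (-(1/2) * x ^ 2) = Real.sqrt (Real.pi / (1/2)) := integral_gaussian (1/2)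
  unfold phi
  rw [MeasureTheory.integral_const_mul]
  have : (fun x : ℝ => Real.exp (-(x^2) / 2)) = fun x : ℝ => Real.exp (-(1/2) * x ^ 2) := by
    funext x; ring_nf
  rw [this, h]
  rw [inv_mul_eq_one₀ (by positivity)]
  norm_num
  ring

lemma Phi_sub (u v : ℝ) : Phi v - Phi u = ∫ t in u..v, phi t := by
  unfold Phi
  exact intervalIntegral.integral_Iic_sub_Iic integrable_phi.integrableOn integrable_phi.integrableOn

lemma support_phi : Function.support phi = Set.univ := by
  ext x; simp [Function.support, ne_of_gt (phi_pos x)]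

lemma Phi_pos (x : ℝ) : 0 < Phi x := by
  unfold Phi
  rw [MeasureTheory.setIntegral_pos_iff_support_of_nonneg_ae
    (Filter.Eventually.of_forall fun t => (phi_pos t).le) integrable_phi.integrableOn]
  rw [support_phi, Set.univ_inter]
  simp [Real.volume_Iic]

lemma Phi_lt_one (x : ℝ) : Phi x < 1 := by
  have h := intervalIntegral.integral_Iic_add_Ioi (b := x) integrable_phi.integrableOn integrable_phi.integrableOn
  rw [integral_phi] at h
  have hpos : 0 < ∫ t in Set.Ioi x, phi t := by
    rw [MeasureTheory.setIntegral_pos_iff_support_of_nonneg_ae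
      (Filter.Eventually.of_forall fun t => (phi_pos t).le) integrable_phi.integrableOn]
    rw [support_phi, Set.univ_inter]
    simp [Real.volume_Ioi]
  unfold Phi; linarith

lemma hasDerivAt_phi (x : ℝ) : HasDerivAt phi (-x * phi x) x := by
  unfold phi
  have h : HasDerivAt (fun y : ℝ => -(y ^ 2) / 2) (-x) x := by
    have := ((hasDerivAt_pow 2 x).neg).div_const 2
    simpa using this.congr_deriv (by ring)
  have := (h.exp).const_mul (Real.sqrt (2 * Real.pi))⁻¹
  exact this.congr_deriv (by ring)


lemma hasDerivAt_Phi (x : ℝ) : HasDerivAt Phi (phi x) x := by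
  have h : HasDerivAt (fun y => Phi 0 + ∫ t in (0:ℝ)..y, phi t) (phi x) x := by
    apply HasDerivAt.const_add
    exact (intervalIntegral.integral_hasStrictDerivAt_right
      (continuous_phi.intervalIntegrable _ _)
      (continuous_phi.stronglyMeasurableAtFilter _ _) continuous_phi.continuousAt).hasDerivAt
  have e : (fun y => Phi 0 + ∫ t in (0:ℝ)..y, phi t) = Phi := by
    funext y; rw [← Phi_sub]; ring
  rwa [e] at h

lemma continuous_Phi : Continuous Phi :=
  continuous_iff_continuousAt.2 fun x => (hasDerivAt_Phi x).continuousAt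

lemma contPhiSub (θ : ℝ) : Continuous fun t : ℝ => phi (t - θ) :=
  continuous_phi.comp (by fun_prop)

lemma cell_P (θ u v : ℝ) : ∫ t in u..v, phi (t - θ) = Phi (v - θ) - Phi (u - θ) := by
  rw [Phi_sub, intervalIntegral.integral_comp_sub_right]

lemma cell_P_pos (θ u v : ℝ) (huv : u < v) : 0 < Phi (v - θ) - Phi (u - θ) := by
  rw [← cell_P]
  exact intervalIntegral.intervalIntegral_pos_of_pos ((contPhiSub θ).intervalIntegrable u v)
    (fun t => phi_pos _) huv

lemma cell_Q (θ u v : ℝ) :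
    ∫ t in u..v, (t - θ) * phi (t - θ) = phi (u - θ) - phi (v - θ) := by
  have hd : ∀ t ∈ Set.uIcc u v, HasDerivAt (fun y => -phi (y - θ)) ((t - θ) * phi (t - θ)) t := by
    intro t _
    have h1 : HasDerivAt (fun y : ℝ => y - θ) 1 t := (hasDerivAt_id t).sub_const θ
    have := ((hasDerivAt_phi (t - θ)).comp t h1).neg
    exact this.congr_deriv (by ring)
  rw [intervalIntegral.integral_eq_sub_of_hasDerivAt hd
    (Continuous.intervalIntegrable ((continuous_id.sub continuous_const).mul (contPhiSub θ)) u v)]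
  ring

lemma cell_ident (θ u v c : ℝ) :
    ∫ t in u..v, ((t - θ) - c) ^ 2 * phi (t - θ) =
      (∫ t in u..v, (t - θ) ^ 2 * phi (t - θ))
      - 2 * c * (∫ t in u..v, (t - θ) * phi (t - θ))
      + c ^ 2 * (∫ t in u..v, phi (t - θ)) := by
  have e : ∀ t : ℝ, ((t - θ) - c) ^ 2 * phi (t - θ) =
      (t - θ) ^ 2 * phi (t - θ) - (2 * c) * ((t - θ) * phi (t - θ)) + c ^ 2 * phi (t - θ) := by
    intro t; ring
  simp only [e]
  rw [intervalIntegral.integral_add, intervalIntegral.integral_sub,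
    intervalIntegral.integral_const_mul, intervalIntegral.integral_const_mul]
  · exact Continuous.intervalIntegrable (by unfold phi; fun_prop) u v
  · exact Continuous.intervalIntegrable (by unfold phi; fun_prop) u v
  · exact Continuous.intervalIntegrable (by unfold phi; fun_prop) u v
  · exact Continuous.intervalIntegrable (by unfold phi; fun_prop) u v

lemma cell_bounds (θ u v : ℝ) (huv : u < v) :
    (∫ t in u..v, (t - θ) ^ 2 * phi (t - θ)) - (v - u) ^ 2 / 4 * (Phi (v - θ) - Phi (u - θ)) ≤
      (phi (u - θ) - phi (v - θ)) ^ 2 / (Phi (v - θ) - Phi (u - θ)) ∧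
    (phi (u - θ) - phi (v - θ)) ^ 2 / (Phi (v - θ) - Phi (u - θ)) ≤
      ∫ t in u..v, (t - θ) ^ 2 * phi (t - θ) := by
  set P := Phi (v - θ) - Phi (u - θ) with hPdef
  set Q := phi (u - θ) - phi (v - θ) with hQdef
  set R := ∫ t in u..v, (t - θ) ^ 2 * phi (t - θ) with hRdef
  have hP : 0 < P := cell_P_pos θ u v huv
  have hIP : ∫ t in u..v, phi (t - θ) = P := cell_P θ u v
  have hIQ : ∫ t in u..v, (t - θ) * phi (t - θ) = Q := cell_Q θ u v
  have ident : ∀ c : ℝ, ∫ t in u..v, ((t - θ) - c) ^ 2 * phi (t - θ) =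
      R - 2 * c * Q + c ^ 2 * P := by
    intro c; rw [cell_ident, hIP, hIQ]
  -- upper bound
  have hupper : Q ^ 2 / P ≤ R := by
    have h0 : 0 ≤ ∫ t in u..v, ((t - θ) - Q / P) ^ 2 * phi (t - θ) :=
      intervalIntegral.integral_nonneg huv.le (fun t _ =>
        mul_nonneg (sq_nonneg _) (phi_pos _).le)
    rw [ident] at h0
    have he : R - 2 * (Q / P) * Q + (Q / P) ^ 2 * P = R - Q ^ 2 / P := by
      field_simp; ring
    rw [he] at h0; linarith
  -- lower bound
  refine ⟨?_, hupper⟩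
  set c0 := (u + v) / 2 - θ with hc0
  have hmono : ∫ t in u..v, ((t - θ) - c0) ^ 2 * phi (t - θ) ≤
      ∫ t in u..v, ((v - u) / 2) ^ 2 * phi (t - θ) := by
    apply intervalIntegral.integral_mono_on huv.le
    · exact Continuous.intervalIntegrable (by unfold phi; fun_prop) u v
    · exact Continuous.intervalIntegrable (by unfold phi; fun_prop) u v
    · intro t ht
      rw [Set.mem_Icc] at ht
      have h1 : ((t - θ) - c0) ^ 2 ≤ ((v - u) / 2) ^ 2 := by
        rw [hc0]; nlinarith [ht.1, ht.2]
      exact mul_le_mul_of_nonneg_right h1 (phi_pos _).le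
  rw [ident, intervalIntegral.integral_const_mul, hIP] at hmono
  rw [← sub_nonneg]
  have he : Q ^ 2 / P - (R - (v - u) ^ 2 / 4 * P) =
      ((Q - c0 * P) ^ 2 + (((v - u) / 2) ^ 2 * P - (R - 2 * c0 * Q + c0 ^ 2 * P)) * P) / P := by
    field_simp; ring
  rw [he]
  apply div_nonneg _ hP.le
  have := sq_nonneg (Q - c0 * P)
  nlinarith [hP.le]

lemma mid_succ_sub (a b : ℝ) (k i : ℕ) (hk : 1 ≤ k) :
    mid a b k (i + 1) = mid a b k i + (b - a) / k := by
  have hk' : (k : ℝ) ≠ 0 := Nat.cast_ne_zero.2 (by omega)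
  unfold mid; push_cast; field_simp; ring

lemma mid_lt_succ (a b : ℝ) (hab : a < b) (k i : ℕ) (hk : 1 ≤ k) :
    mid a b k i < mid a b k (i + 1) := by
  rw [mid_succ_sub a b k i hk]
  have : (0:ℝ) < (b - a) / k := by
    apply div_pos (by linarith) (by exact_mod_cast Nat.pos_of_ne_zero (by omega))
  linarith

lemma middle_sum_bounds (a b θ : ℝ) (hab : a < b) (k : ℕ) (hk : 1 ≤ k)
    (f : ℕ → ℝ)
    (hf : ∀ j ∈ Finset.range (k - 1), f j =
      (phi (mid a b k (1 + j) - θ) - phi (mid a b k (2 + j) - θ)) ^ 2 /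
        (Phi (mid a b k (2 + j) - θ) - Phi (mid a b k (1 + j) - θ))) :
    (∫ t in (mid a b k 1)..(mid a b k k), (t - θ) ^ 2 * phi (t - θ))
      - ((b - a) / k) ^ 2 / 4 * (Phi (mid a b k k - θ) - Phi (mid a b k 1 - θ))
      ≤ ∑ j ∈ Finset.range (k - 1), f j ∧
    ∑ j ∈ Finset.range (k - 1), f j ≤
      ∫ t in (mid a b k 1)..(mid a b k k), (t - θ) ^ 2 * phi (t - θ) := by
  have hcont1 : Continuous fun t : ℝ => (t - θ) ^ 2 * phi (t - θ) := by unfold phi; fun_prop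
  have hSR : ∑ j ∈ Finset.range (k - 1),
      (∫ t in (mid a b k (1 + j))..(mid a b k (2 + j)), (t - θ) ^ 2 * phi (t - θ)) =
      ∫ t in (mid a b k 1)..(mid a b k k), (t - θ) ^ 2 * phi (t - θ) := by
    have := intervalIntegral.sum_integral_adjacent_intervals (μ := MeasureTheory.volume)
      (a := fun j => mid a b k (1 + j)) (f := fun t => (t - θ) ^ 2 * phi (t - θ)) (n := k - 1)
      (fun i _ => hcont1.intervalIntegrable _ _)
    have e1 : 1 + (k - 1) = k := by omega
    simp only [e1] at this
    rw [← this]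
    apply Finset.sum_congr rfl
    intro j hj
    have e2 : 1 + (j + 1) = 2 + j := by omega
    rw [e2]
  have hSP : ∑ j ∈ Finset.range (k - 1),
      (Phi (mid a b k (2 + j) - θ) - Phi (mid a b k (1 + j) - θ)) =
      Phi (mid a b k k - θ) - Phi (mid a b k 1 - θ) := by
    have := intervalIntegral.sum_integral_adjacent_intervals (μ := MeasureTheory.volume)
      (a := fun j => mid a b k (1 + j)) (f := fun t => phi (t - θ)) (n := k - 1)
      (fun i _ => (contPhiSub θ).intervalIntegrable _ _)
    have e1 : 1 + (k - 1) = k := by omega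
    simp only [e1] at this
    calc ∑ j ∈ Finset.range (k - 1),
        (Phi (mid a b k (2 + j) - θ) - Phi (mid a b k (1 + j) - θ))
        = ∑ j ∈ Finset.range (k - 1),
          ∫ t in (mid a b k (1 + j))..(mid a b k (1 + (j + 1))), phi (t - θ) := by
          apply Finset.sum_congr rfl; intro j hj
          have e2 : 1 + (j + 1) = 2 + j := by omega
          rw [e2, cell_P]
      _ = ∫ t in (mid a b k 1)..(mid a b k k), phi (t - θ) := this
      _ = Phi (mid a b k k - θ) - Phi (mid a b k 1 - θ) := cell_P θ _ _
  have hcell : ∀ j ∈ Finset.range (k - 1),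
      ((∫ t in (mid a b k (1 + j))..(mid a b k (2 + j)), (t - θ) ^ 2 * phi (t - θ))
        - ((b - a) / k) ^ 2 / 4 * (Phi (mid a b k (2 + j) - θ) - Phi (mid a b k (1 + j) - θ))
        ≤ f j) ∧
      f j ≤ ∫ t in (mid a b k (1 + j))..(mid a b k (2 + j)), (t - θ) ^ 2 * phi (t - θ) := by
    intro j hj
    have e2 : 2 + j = (1 + j) + 1 := by omega
    have hlt : mid a b k (1 + j) < mid a b k (2 + j) := by
      rw [e2]; exact mid_lt_succ a b hab k (1 + j) hk
    have hdiff : mid a b k (2 + j) - mid a b k (1 + j) = (b - a) / k := by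
      rw [e2, mid_succ_sub a b k (1 + j) hk]; ring
    have := cell_bounds θ (mid a b k (1 + j)) (mid a b k (2 + j)) hlt
    rw [hdiff] at this
    rw [hf j hj]
    exact this
  constructor
  · rw [← hSR, ← hSP, Finset.mul_sum, ← Finset.sum_sub_distrib]
    exact Finset.sum_le_sum fun j hj => (hcell j hj).1
  · rw [← hSR]
    exact Finset.sum_le_sum fun j hj => (hcell j hj).2

lemma SR_eq (θ u v : ℝ) :
    ∫ t in u..v, (t - θ) ^ 2 * phi (t - θ)
      = (Phi (v - θ) - (v - θ) * phi (v - θ)) - (Phi (u - θ) - (u - θ) * phi (u - θ)) := by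
  have hd : ∀ t ∈ Set.uIcc u v, HasDerivAt (fun y => Phi (y - θ) - (y - θ) * phi (y - θ))
      ((t - θ) ^ 2 * phi (t - θ)) t := by
    intro t _
    have h1 : HasDerivAt (fun y : ℝ => y - θ) 1 t := (hasDerivAt_id t).sub_const θ
    have h2 := (hasDerivAt_Phi (t - θ)).comp t h1
    have h3 := (hasDerivAt_phi (t - θ)).comp t h1
    have h4 := h1.mul h3
    have h5 := h2.sub h4
    simp only [Function.comp] at h5
    exact h5.congr_deriv (by ring)
  rw [intervalIntegral.integral_eq_sub_of_hasDerivAt hd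
    (Continuous.intervalIntegrable (by unfold phi; fun_prop) u v)]

/-- Probability that a quantized `N(θ,1)` sample takes the `i`-th alphabet value. -/
noncomputable def pQ (a b θ : ℝ) (k i : ℕ) : ℝ :=
  if i = 1 then Phi (mid a b k 1 - θ)
  else if i = k + 1 then 1 - Phi (mid a b k k - θ)
  else Phi (mid a b k i - θ) - Phi (mid a b k (i - 1) - θ)

/-- Derivative in `θ` of the probability `pQ`. -/
noncomputable def qQ (a b θ : ℝ) (k i : ℕ) : ℝ :=
  if i = 1 then -phi (mid a b k 1 - θ)
  else if i = k + 1 then phi (mid a b k k - θ)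
  else phi (mid a b k (i - 1) - θ) - phi (mid a b k i - θ)

/-- The Fisher information of the `k`-level uniform quantization of a `N(θ,1)`
sample on `[a,b]` converges, as `k → ∞`, to the Fisher information of the
rectified Gaussian `N^R(θ, 1, [a,b])`. -/
theorem quantized_fisher_info_tendsto_rectified (a b θ : ℝ) (hab : a < b) :
    Tendsto (fun k : ℕ => ∑ i ∈ Finset.Icc 1 (k + 1), qQ a b θ k i ^ 2 / pQ a b θ k i)
      atTop
      (nhds (phi (a - θ) ^ 2 / Phi (a - θ) + phi (b - θ) ^ 2 / (1 - Phi (b - θ)) +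
        Phi (b - θ) - Phi (a - θ) + (a - θ) * phi (a - θ) - (b - θ) * phi (b - θ))) := by
  have hPhia : 0 < Phi (a - θ) := Phi_pos _
  have hPhib : Phi (b - θ) < 1 := Phi_lt_one _
  -- limits of the extreme midpoints
  have hm1 : Tendsto (fun k : ℕ => mid a b k 1) atTop (nhds a) := by
    have he : (fun k : ℕ => mid a b k 1) = fun k : ℕ => a + ((b - a) / 2) / k := by
      funext k; unfold mid; push_cast; rw [div_div]; norm_num
    rw [he]
    simpa using (tendsto_const_nhds (x := a)).add
      (tendsto_const_div_atTop_nhds_zero_nat ((b - a) / 2))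
  have hmk : Tendsto (fun k : ℕ => mid a b k k) atTop (nhds b) := by
    have h2 : Tendsto (fun k : ℕ => b - ((b - a) / 2) / k) atTop (nhds b) := by
      simpa using (tendsto_const_nhds (x := b)).sub
        (tendsto_const_div_atTop_nhds_zero_nat ((b - a) / 2))
    apply Tendsto.congr' ?_ h2
    filter_upwards [eventually_ge_atTop 1] with k hk
    have hk' : (k : ℝ) ≠ 0 := Nat.cast_ne_zero.2 (by omega)
    unfold mid; field_simp; ring
  have hm1' : Tendsto (fun k : ℕ => mid a b k 1 - θ) atTop (nhds (a - θ)) :=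
    hm1.sub tendsto_const_nhds
  have hmk' : Tendsto (fun k : ℕ => mid a b k k - θ) atTop (nhds (b - θ)) :=
    hmk.sub tendsto_const_nhds
  -- boundary terms
  have hA : Tendsto (fun k : ℕ => phi (mid a b k 1 - θ) ^ 2 / Phi (mid a b k 1 - θ)) atTop
      (nhds (phi (a - θ) ^ 2 / Phi (a - θ))) :=
    (((continuous_phi.tendsto _).comp hm1').pow 2).div
      ((continuous_Phi.tendsto _).comp hm1') (ne_of_gt hPhia)
  have hC : Tendsto (fun k : ℕ => phi (mid a b k k - θ) ^ 2 / (1 - Phi (mid a b k k - θ))) atTop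
      (nhds (phi (b - θ) ^ 2 / (1 - Phi (b - θ)))) :=
    (((continuous_phi.tendsto _).pow 2).comp hmk').div
      (tendsto_const_nhds.sub ((continuous_Phi.tendsto _).comp hmk'))
      (by intro h; rw [sub_eq_zero] at h; exact absurd h.symm (ne_of_lt hPhib))
  -- middle sum via squeeze
  set F : ℝ → ℝ := fun x => Phi (x - θ) - (x - θ) * phi (x - θ) with hFdef
  have contF : Continuous F := by
    apply (continuous_Phi.comp (by fun_prop)).sub
    exact (continuous_id.sub continuous_const).mul (contPhiSub θ)
  have hU : Tendsto (fun k : ℕ => F (mid a b k k) - F (mid a b k 1)) atTop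
      (nhds (F b - F a)) :=
    ((contF.tendsto _).comp hmk).sub ((contF.tendsto _).comp hm1)
  have hSP : Tendsto (fun k : ℕ => Phi (mid a b k k - θ) - Phi (mid a b k 1 - θ)) atTop
      (nhds (Phi (b - θ) - Phi (a - θ))) :=
    ((continuous_Phi.tendsto _).comp hmk').sub ((continuous_Phi.tendsto _).comp hm1')
  have hh0 : Tendsto (fun k : ℕ => ((b - a) / k) ^ 2 / 4) atTop (nhds 0) := by
    have := ((tendsto_const_div_atTop_nhds_zero_nat (b - a)).pow 2).div_const 4
    simpa using this
  have hL : Tendsto (fun k : ℕ => (F (mid a b k k) - F (mid a b k 1))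
      - ((b - a) / k) ^ 2 / 4 * (Phi (mid a b k k - θ) - Phi (mid a b k 1 - θ))) atTop
      (nhds (F b - F a)) := by
    have := hU.sub (hh0.mul hSP)
    simpa using this
  have hMbound : ∀ k : ℕ, 1 ≤ k →
      ((F (mid a b k k) - F (mid a b k 1))
        - ((b - a) / k) ^ 2 / 4 * (Phi (mid a b k k - θ) - Phi (mid a b k 1 - θ))
        ≤ ∑ i ∈ Finset.Icc 2 k, qQ a b θ k i ^ 2 / pQ a b θ k i) ∧
      ∑ i ∈ Finset.Icc 2 k, qQ a b θ k i ^ 2 / pQ a b θ k i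
        ≤ F (mid a b k k) - F (mid a b k 1) := by
    intro k hk
    have hrange : ∑ i ∈ Finset.Icc 2 k, qQ a b θ k i ^ 2 / pQ a b θ k i
        = ∑ j ∈ Finset.range (k - 1), qQ a b θ k (2 + j) ^ 2 / pQ a b θ k (2 + j) := by
      rw [← Finset.Ico_add_one_right_eq_Icc, Finset.sum_Ico_eq_sum_range]
      congr 1
    have hf : ∀ j ∈ Finset.range (k - 1), qQ a b θ k (2 + j) ^ 2 / pQ a b θ k (2 + j) =
        (phi (mid a b k (1 + j) - θ) - phi (mid a b k (2 + j) - θ)) ^ 2 /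
          (Phi (mid a b k (2 + j) - θ) - Phi (mid a b k (1 + j) - θ)) := by
      intro j hj
      have hj' : j < k - 1 := Finset.mem_range.1 hj
      have h1 : 2 + j ≠ 1 := by omega
      have h2 : 2 + j ≠ k + 1 := by omega
      have h3 : 2 + j - 1 = 1 + j := by omega
      simp only [qQ, pQ, if_neg h1, if_neg h2, h3]
    have hb := middle_sum_bounds a b θ hab k hk _ hf
    rw [SR_eq] at hb
    rw [hrange]
    exact hb
  have hM : Tendsto (fun k : ℕ => ∑ i ∈ Finset.Icc 2 k, qQ a b θ k i ^ 2 / pQ a b θ k i)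
      atTop (nhds (F b - F a)) := by
    apply tendsto_of_tendsto_of_tendsto_of_le_of_le' hL hU
    · filter_upwards [eventually_ge_atTop 1] with k hk
      exact (hMbound k hk).1
    · filter_upwards [eventually_ge_atTop 1] with k hk
      exact (hMbound k hk).2
  -- assemble
  have hsum : Tendsto (fun k : ℕ =>
      phi (mid a b k 1 - θ) ^ 2 / Phi (mid a b k 1 - θ)
      + (phi (mid a b k k - θ) ^ 2 / (1 - Phi (mid a b k k - θ))
        + ∑ i ∈ Finset.Icc 2 k, qQ a b θ k i ^ 2 / pQ a b θ k i)) atTop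
      (nhds (phi (a - θ) ^ 2 / Phi (a - θ)
        + (phi (b - θ) ^ 2 / (1 - Phi (b - θ)) + (F b - F a)))) :=
    hA.add (hC.add hM)
  have heq : (fun k : ℕ =>
      phi (mid a b k 1 - θ) ^ 2 / Phi (mid a b k 1 - θ)
      + (phi (mid a b k k - θ) ^ 2 / (1 - Phi (mid a b k k - θ))
        + ∑ i ∈ Finset.Icc 2 k, qQ a b θ k i ^ 2 / pQ a b θ k i)) =ᶠ[atTop]
      (fun k : ℕ => ∑ i ∈ Finset.Icc 1 (k + 1), qQ a b θ k i ^ 2 / pQ a b θ k i) := by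
    filter_upwards [eventually_ge_atTop 1] with k hk
    have hset : Finset.Icc 1 (k + 1) = insert 1 (insert (k + 1) (Finset.Icc 2 k)) := by
      ext i
      simp only [Finset.mem_Icc, Finset.mem_insert]
      omega
    have hn1 : (1 : ℕ) ∉ insert (k + 1) (Finset.Icc 2 k) := by
      simp only [Finset.mem_insert, Finset.mem_Icc]
      omega
    have hn2 : k + 1 ∉ Finset.Icc 2 k := by
      simp only [Finset.mem_Icc]
      omega
    rw [hset, Finset.sum_insert hn1, Finset.sum_insert hn2]
    have hne : k + 1 ≠ 1 := by omega
    have e1 : qQ a b θ k 1 ^ 2 / pQ a b θ k 1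
        = phi (mid a b k 1 - θ) ^ 2 / Phi (mid a b k 1 - θ) := by
      simp [qQ, pQ]
    have e2 : qQ a b θ k (k + 1) ^ 2 / pQ a b θ k (k + 1)
        = phi (mid a b k k - θ) ^ 2 / (1 - Phi (mid a b k k - θ)) := by
      rw [qQ, pQ, if_neg hne, if_neg hne, if_pos rfl, if_pos rfl]
    rw [e1, e2]
  have hfinal := hsum.congr' heq
  have hlim : phi (a - θ) ^ 2 / Phi (a - θ) + phi (b - θ) ^ 2 / (1 - Phi (b - θ)) +
      Phi (b - θ) - Phi (a - θ) + (a - θ) * phi (a - θ) - (b - θ) * phi (b - θ)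
      = phi (a - θ) ^ 2 / Phi (a - θ)
        + (phi (b - θ) ^ 2 / (1 - Phi (b - θ)) + (F b - F a)) := by
    rw [hFdef]
    ring
  rw [hlim]
  exact hfinal
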